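/- Let ℓ ≥ 1 be an integer. There exists a polynomial H in ℓ+1 variables with real coefficients, homogeneous of degree ℓ, such that for all real numbers 1 ≤ R_1 ≤ R_2 ≤ ⋯ ≤ R_{ℓ+1}, the integral ∫_{W(R_1,…,R_{ℓ+1})} ∏_{i=1}^{ℓ} dx_i/x_i over the region W(R_1,…,R_{ℓ+1}) = {x ∈ ℝ^ℓ : R_1 ≤ x_1 < x_2 < ⋯ < x_ℓ ≤ R_{ℓ+1} and x_i > R_i for each i} equals (1/ℓ!)·H(log R_1, log R_2, …, log R_{ℓ+1}). -/

import Mathlib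

open MeasureTheory

/-- The region `W(R_1, …, R_{ℓ+1}) = {x ∈ ℝ^ℓ : R_1 ≤ x_1 < ⋯ < x_ℓ ≤ R_{ℓ+1}, x_i > R_i}`
(0-indexed: `R i.castSucc < x i` for each `i`, `x` strictly increasing, all coordinates at
most `R (Fin.last ℓ)`). -/
def shapeRegion (ℓ : ℕ) (R : Fin (ℓ + 1) → ℝ) : Set (Fin ℓ → ℝ) :=
  {x | (∀ i j : Fin ℓ, i < j → x i < x j) ∧
    ∀ i : Fin ℓ, R i.castSucc < x i ∧ x i ≤ R (Fin.last ℓ)}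

namespace ShapeRegionAux

open MvPolynomial

/-! ### Polynomial antiderivative in the last variable -/

noncomputable def psi (n : ℕ) (p : MvPolynomial (Fin (n+1)) ℝ) : MvPolynomial (Fin (n+1)) ℝ :=
  ∑ d ∈ p.support, monomial (d + Finsupp.single (Fin.last n) 1)
    (((d (Fin.last n) : ℝ) + 1)⁻¹ * coeff d p)

lemma degree_eq_sum_univ {σ : Type*} [Fintype σ] (d : σ →₀ ℕ) : d.degree = ∑ i, d i := by
  rw [Finsupp.degree]
  exact Finset.sum_subset (Finset.subset_univ _)
    (fun i _ hi => by simpa using (Finsupp.notMem_support_iff.1 hi))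

lemma psi_isHomogeneous {n k : ℕ} {p : MvPolynomial (Fin (n+1)) ℝ} (hp : p.IsHomogeneous k) :
    (psi n p).IsHomogeneous (k+1) := by
  apply MvPolynomial.IsHomogeneous.sum
  intro d hd
  apply isHomogeneous_monomial
  have hdeg : d.degree = k := by
    have := hp (MvPolynomial.mem_support_iff.1 hd)
    rw [Finsupp.degree_eq_weight_one]
    exact this
  rw [degree_eq_sum_univ] at hdeg ⊢
  simp only [Finsupp.add_apply, Finset.sum_add_distrib, hdeg]
  congr 1
  simp [Finsupp.single_apply]

lemma eval_monomial_snoc {n : ℕ} (a : Fin n → ℝ) (s : ℝ) (d : Fin (n+1) →₀ ℕ) (c : ℝ) :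
    eval (Fin.snoc a s) (monomial d c)
      = c * (∏ i : Fin n, a i ^ d i.castSucc) * s ^ d (Fin.last n) := by
  rw [eval_monomial, Finsupp.prod_pow, Fin.prod_univ_castSucc]
  simp [mul_assoc]

lemma eval_snoc_as_sum {n : ℕ} (p : MvPolynomial (Fin (n+1)) ℝ) (a : Fin n → ℝ) (s : ℝ) :
    eval (Fin.snoc a s) p
      = ∑ d ∈ p.support, coeff d p * (∏ i : Fin n, a i ^ d i.castSucc) * s ^ d (Fin.last n) := by
  conv_lhs => rw [p.as_sum]
  rw [map_sum]
  exact Finset.sum_congr rfl fun d _ => eval_monomial_snoc a s d (coeff d p)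

lemma eval_snoc_psi {n : ℕ} (p : MvPolynomial (Fin (n+1)) ℝ) (a : Fin n → ℝ) (u : ℝ) :
    eval (Fin.snoc a u) (psi n p)
      = ∑ d ∈ p.support, ((d (Fin.last n) : ℝ) + 1)⁻¹ * coeff d p
          * (∏ i : Fin n, a i ^ d i.castSucc) * u ^ (d (Fin.last n) + 1) := by
  rw [psi, map_sum]
  refine Finset.sum_congr rfl fun d _ => ?_
  rw [eval_monomial_snoc]
  have h1 : ∀ i : Fin n,
      ((d + Finsupp.single (Fin.last n) 1 : Fin (n+1) →₀ ℕ)) i.castSucc = d i.castSucc := by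
    intro i
    simp [Finsupp.single_apply, (Fin.castSucc_lt_last i).ne']
  have h2 : ((d + Finsupp.single (Fin.last n) 1 : Fin (n+1) →₀ ℕ)) (Fin.last n)
      = d (Fin.last n) + 1 := by simp
  simp only [h2]
  congr 1
  congr 1
  exact Finset.prod_congr rfl fun i _ => by rw [h1]

lemma psi_hasDerivAt {n : ℕ} (p : MvPolynomial (Fin (n+1)) ℝ) (a : Fin n → ℝ) (s : ℝ) :
    HasDerivAt (fun u => eval (Fin.snoc a u) (psi n p)) (eval (Fin.snoc a s) p) s := by
  have hfun : (fun u => eval (Fin.snoc a u) (psi n p))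
      = fun u => ∑ d ∈ p.support, ((d (Fin.last n) : ℝ) + 1)⁻¹ * coeff d p
          * (∏ i : Fin n, a i ^ d i.castSucc) * u ^ (d (Fin.last n) + 1) :=
    by funext u; rw [eval_snoc_psi]
  rw [hfun, eval_snoc_as_sum]
  apply HasDerivAt.fun_sum
  intro d _
  set k := d (Fin.last n)
  set C := ((k : ℝ) + 1)⁻¹ * coeff d p * (∏ i : Fin n, a i ^ d i.castSucc)
  have h := (hasDerivAt_pow (k+1) s).const_mul C
  convert h using 1
  · rfl
  have hk : ((k : ℝ) + 1) ≠ 0 := by positivity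
  simp only [Nat.add_sub_cancel, Nat.cast_add, Nat.cast_one, C]
  field_simp

lemma continuous_eval_snoc {n : ℕ} (p : MvPolynomial (Fin (n+1)) ℝ) (a : Fin n → ℝ) :
    Continuous fun s : ℝ => eval (Fin.snoc a s) p := by
  refine p.continuous_eval.comp (continuous_pi fun i => ?_)
  induction i using Fin.lastCases with
  | last => simp only [Fin.snoc_last]; exact continuous_id
  | cast j => simp only [Fin.snoc_castSucc]; exact continuous_const

/-! ### Measurability and integrability -/

lemma measurableSet_shapeRegion (ℓ : ℕ) (R : Fin (ℓ + 1) → ℝ) :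
    MeasurableSet (shapeRegion ℓ R) := by
  have : shapeRegion ℓ R =
      (⋂ i, ⋂ j, ⋂ (_ : i < j), {x : Fin ℓ → ℝ | x i < x j}) ∩
      (⋂ i, ({x : Fin ℓ → ℝ | R i.castSucc < x i} ∩ {x | x i ≤ R (Fin.last ℓ)})) := by
    ext x
    simp only [shapeRegion, Set.mem_setOf_eq, Set.mem_inter_iff, Set.mem_iInter,
      Set.mem_setOf_eq]
  rw [this]
  refine MeasurableSet.inter ?_ ?_
  · exact .iInter fun i => .iInter fun j => .iInter fun _ =>
      measurableSet_lt (measurable_pi_apply i) (measurable_pi_apply j)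
  · exact .iInter fun i => (measurableSet_lt measurable_const (measurable_pi_apply i)).inter
      (measurableSet_le (measurable_pi_apply i) measurable_const)

lemma measurable_prodInv (ℓ : ℕ) : Measurable fun x : Fin ℓ → ℝ => ∏ i, (x i)⁻¹ :=
  Finset.measurable_prod _ fun i _ => (measurable_pi_apply i).inv

lemma integrableOn_shapeRegion (ℓ : ℕ) (R : Fin (ℓ + 1) → ℝ) (hR : 1 ≤ R 0)
    (hmono : Monotone R) :
    IntegrableOn (fun x : Fin ℓ → ℝ => ∏ i, (x i)⁻¹) (shapeRegion ℓ R) := by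
  have hsub : shapeRegion ℓ R ⊆ Set.pi Set.univ fun _ : Fin ℓ => Set.Icc (R 0) (R (Fin.last ℓ)) := by
    intro x hx i _
    exact ⟨(hmono (Fin.zero_le _)).trans (hx.2 i).1.le, (hx.2 i).2⟩
  have hfin : volume (shapeRegion ℓ R) ≠ ⊤ := by
    refine ne_top_of_le_ne_top ?_ (measure_mono hsub)
    rw [volume_pi_pi]
    exact (ENNReal.prod_lt_top fun _ _ => by simp [Real.volume_Icc]).ne
  refine Measure.integrableOn_of_bounded (M := 1) hfin
    ((measurable_prodInv ℓ).aestronglyMeasurable) ?_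
  rw [ae_restrict_iff' (measurableSet_shapeRegion ℓ R)]
  filter_upwards with x hx
  have h1 : ∀ i, 1 ≤ x i := fun i => hR.trans ((hmono (Fin.zero_le _)).trans (hx.2 i).1.le)
  have h0 : (0:ℝ) ≤ ∏ i, (x i)⁻¹ :=
    Finset.prod_nonneg fun i _ => inv_nonneg.2 ((zero_le_one).trans (h1 i))
  rw [Real.norm_eq_abs, abs_of_nonneg h0]
  exact Finset.prod_le_one (fun i _ => inv_nonneg.2 ((zero_le_one).trans (h1 i)))
    (fun i _ => inv_le_one_of_one_le₀ (h1 i))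

/-! ### Slicing -/

variable {n : ℕ}

noncomputable def rTrunc (R : Fin (n+2) → ℝ) (t : ℝ) : Fin (n+1) → ℝ :=
  Fin.snoc (fun i : Fin n => R i.castSucc.castSucc) t

lemma snoc_mem_shapeRegion_iff {R : Fin (n+2) → ℝ} {t : ℝ}
    (ht : t ∈ Set.Ioc (R (Fin.last n).castSucc) (R (Fin.last (n+1)))) (y : Fin n → ℝ) :
    Fin.snoc y t ∈ shapeRegion (n+1) R ↔
      y ∈ shapeRegion n (rTrunc R t) ∧ ∀ i, y i < t := by
  constructor
  · rintro ⟨hinc, hbd⟩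
    have hlt : ∀ i : Fin n, y i < t := by
      intro i
      have := hinc i.castSucc (Fin.last n) (Fin.castSucc_lt_last i)
      simpa using this
    refine ⟨⟨?_, ?_⟩, hlt⟩
    · intro i j hij
      have := hinc i.castSucc j.castSucc (by simpa using hij)
      simpa using this
    · intro i
      have h := hbd i.castSucc
      rw [Fin.snoc_castSucc] at h
      refine ⟨?_, ?_⟩
      · have : rTrunc R t i.castSucc = R i.castSucc.castSucc := by
          simp [rTrunc]
        rw [this]; exact h.1
      · have : rTrunc R t (Fin.last n) = t := by simp [rTrunc]
        rw [this]; exact (hlt i).le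
  · rintro ⟨⟨hinc, hbd⟩, hlt⟩
    constructor
    · intro i j hij
      induction j using Fin.lastCases with
      | last =>
        rw [Fin.snoc_last]
        induction i using Fin.lastCases with
        | last => exact absurd hij (lt_irrefl _)
        | cast i' => rw [Fin.snoc_castSucc]; exact hlt i'
      | cast j' =>
        induction i using Fin.lastCases with
        | last => exact absurd (hij.trans (Fin.castSucc_lt_last j')) (lt_irrefl _)
        | cast i' =>
          rw [Fin.snoc_castSucc, Fin.snoc_castSucc]
          exact hinc i' j' (by simpa using hij)
    · intro i
      induction i using Fin.lastCases with
      | last => rw [Fin.snoc_last]; exact ⟨ht.1, ht.2⟩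
      | cast i' =>
        rw [Fin.snoc_castSucc]
        have h := hbd i'
        have h1 : rTrunc R t i'.castSucc = R i'.castSucc.castSucc := by simp [rTrunc]
        have h2 : rTrunc R t (Fin.last n) = t := by simp [rTrunc]
        rw [h1, h2] at h
        exact ⟨h.1, ((hlt i').le).trans ht.2⟩

lemma snoc_not_mem_shapeRegion {R : Fin (n+2) → ℝ} {t : ℝ}
    (ht : t ∉ Set.Ioc (R (Fin.last n).castSucc) (R (Fin.last (n+1)))) (y : Fin n → ℝ) :
    Fin.snoc y t ∉ shapeRegion (n+1) R := by
  rintro ⟨_, hbd⟩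
  have h := hbd (Fin.last n)
  rw [Fin.snoc_last] at h
  exact ht ⟨h.1, h.2⟩

lemma shapeRegion_ae_eq_inter {R' : Fin (n+1) → ℝ} {t : ℝ} (hR' : R' (Fin.last n) = t) :
    (shapeRegion n R' ∩ {y : Fin n → ℝ | ∀ i, y i < t} : Set (Fin n → ℝ))
      =ᵐ[volume] shapeRegion n R' := by
  rw [ae_eq_set]
  refine ⟨by simp [Set.diff_eq_empty.2 Set.inter_subset_left], ?_⟩
  have hsub : shapeRegion n R' \ (shapeRegion n R' ∩ {y : Fin n → ℝ | ∀ i, y i < t})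
      ⊆ ⋃ i : Fin n, {y : Fin n → ℝ | y i = t} := by
    rintro y ⟨hy, hy2⟩
    have : ¬ ∀ i, y i < t := fun h => hy2 ⟨hy, h⟩
    push_neg at this
    obtain ⟨i, hi⟩ := this
    have hle : y i ≤ t := hR' ▸ (hy.2 i).2
    exact Set.mem_iUnion.2 ⟨i, le_antisymm hle hi⟩
  refine measure_mono_null hsub (measure_iUnion_null fun i => ?_)
  rw [volume_pi]
  exact Measure.pi_hyperplane (fun _ : Fin n => (volume : Measure ℝ)) i t

lemma rTrunc_monotone {R : Fin (n+2) → ℝ} (hmono : Monotone R) {t : ℝ}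
    (hLt : R (Fin.last n).castSucc ≤ t) : Monotone (rTrunc R t) := by
  intro i j hij
  induction j using Fin.lastCases with
  | last =>
    have hj : rTrunc R t (Fin.last n) = t := by simp [rTrunc]
    rw [hj]
    induction i using Fin.lastCases with
    | last => simp [rTrunc]
    | cast i' =>
      have hi : rTrunc R t i'.castSucc = R i'.castSucc.castSucc := by simp [rTrunc]
      rw [hi]
      exact (hmono (Fin.castSucc_le_castSucc_iff.2 (Fin.le_last _))).trans hLt
  | cast j' =>
    induction i using Fin.lastCases with
    | last => exact absurd hij (Fin.castSucc_lt_last j').not_ge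
    | cast i' =>
      have hi : rTrunc R t i'.castSucc = R i'.castSucc.castSucc := by simp [rTrunc]
      have hj : rTrunc R t j'.castSucc = R j'.castSucc.castSucc := by simp [rTrunc]
      rw [hi, hj]
      exact hmono (Fin.castSucc_le_castSucc_iff.2
        (Fin.castSucc_le_castSucc_iff.2 (Fin.castSucc_le_castSucc_iff.1 hij)))

lemma one_le_rTrunc {R : Fin (n+2) → ℝ} (hR : 1 ≤ R 0) (hmono : Monotone R) {t : ℝ}
    (hLt : R (Fin.last n).castSucc ≤ t) : 1 ≤ rTrunc R t 0 := by
  have key : ∀ j, 1 ≤ rTrunc R t j := by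
    intro j
    induction j using Fin.lastCases with
    | last =>
      have hj : rTrunc R t (Fin.last n) = t := by simp [rTrunc]
      rw [hj]
      exact hR.trans ((hmono (Fin.zero_le _)).trans hLt)
    | cast i' =>
      have hi : rTrunc R t i'.castSucc = R i'.castSucc.castSucc := by simp [rTrunc]
      rw [hi]
      exact hR.trans (hmono (Fin.zero_le _))
  exact key 0

end ShapeRegionAux

open ShapeRegionAux MvPolynomial in
theorem key_induction (n : ℕ) :
    ∃ H : MvPolynomial (Fin (n + 1)) ℝ, H.IsHomogeneous n ∧
      ∀ R : Fin (n + 1) → ℝ, 1 ≤ R 0 → Monotone R →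
        ∫ x in shapeRegion n R, (∏ i, (x i)⁻¹) =
          ((n.factorial : ℝ))⁻¹ * MvPolynomial.eval (fun i => Real.log (R i)) H := by
  induction n with
  | zero =>
    refine ⟨1, isHomogeneous_one _ _, fun R hR hmono => ?_⟩
    have h : shapeRegion 0 R = Set.univ := by
      ext x
      simp [shapeRegion]
    rw [h, Measure.restrict_univ]
    simp only [Finset.univ_eq_empty, Finset.prod_empty, map_one, Nat.factorial_zero,
      Nat.cast_one, inv_one, one_mul]
    rw [integral_const, volume_pi, measureReal_def, Measure.pi_empty_univ]
    simp
  | succ n IH =>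
    obtain ⟨H, hH, hEval⟩ := IH
    -- index maps
    set j1 : Fin (n+1) → Fin (n+2) :=
      Fin.snoc (fun i : Fin n => i.castSucc.castSucc) (Fin.last (n+1)) with hj1
    refine ⟨((n:ℝ)+1) • (rename j1 (psi n H) - rename Fin.castSucc (psi n H)), ?_, ?_⟩
    · rw [← mem_homogeneousSubmodule]
      refine Submodule.smul_mem _ _ (Submodule.sub_mem _ ?_ ?_)
      · exact (mem_homogeneousSubmodule _ _).2 (psi_isHomogeneous hH).rename_isHomogeneous
      · exact (mem_homogeneousSubmodule _ _).2 (psi_isHomogeneous hH).rename_isHomogeneous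
    intro R hR1 hmono
    set L := R (Fin.last n).castSucc with hLdef
    set U := R (Fin.last (n+1)) with hUdef
    have hLU : L ≤ U := hmono (Fin.le_last _)
    have h1L : (1:ℝ) ≤ L := hR1.trans (hmono (Fin.zero_le _))
    set a : Fin n → ℝ := fun i => Real.log (R i.castSucc.castSucc) with ha
    set f : (Fin (n+1) → ℝ) → ℝ := fun x => ∏ i, (x i)⁻¹ with hf
    set S := shapeRegion (n+1) R with hSdef
    have hS : MeasurableSet S := measurableSet_shapeRegion _ _
    have hInt : IntegrableOn f S := integrableOn_shapeRegion _ R hR1 hmono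
    -- step 1: move to ℝ × (Fin n → ℝ)
    set e := MeasurableEquiv.piFinSuccAbove (fun _ : Fin (n+1) => ℝ) (Fin.last n) with he
    have hmp : MeasurePreserving e volume volume :=
      volume_preserving_piFinSuccAbove (fun _ : Fin (n+1) => ℝ) (Fin.last n)
    have hmps : MeasurePreserving e.symm volume volume := MeasurePreserving.symm _ hmp
    have hesymm : ∀ (t : ℝ) (y : Fin n → ℝ), e.symm (t, y) = Fin.snoc y t := by
      intro t y
      simp [he, MeasurableEquiv.piFinSuccAbove_symm_apply, Fin.insertNth_last', Fin.snocEquiv]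
    have step1 : ∫ x in S, f x = ∫ z : ℝ × (Fin n → ℝ), Set.indicator S f (e.symm z) := by
      rw [← integral_indicator hS]
      exact (MeasurePreserving.integral_comp hmps e.symm.measurableEmbedding _).symm
    have hIf : Integrable (fun z : ℝ × (Fin n → ℝ) => Set.indicator S f (e.symm z)) volume :=
      (hmps.integrable_comp_emb e.symm.measurableEmbedding).2 (hInt.integrable_indicator hS)
    have step2 : ∫ z : ℝ × (Fin n → ℝ), Set.indicator S f (e.symm z)
        = ∫ t : ℝ, ∫ y : Fin n → ℝ, Set.indicator S f (e.symm (t, y)) := by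
      rw [Measure.volume_eq_prod] at hIf ⊢
      exact integral_prod _ hIf
    -- inner integral
    have hinner : ∀ t : ℝ, (∫ y : Fin n → ℝ, Set.indicator S f (e.symm (t, y)))
        = Set.indicator (Set.Ioc L U)
            (fun t => t⁻¹ * ∫ y in shapeRegion n (rTrunc R t), (∏ i, (y i)⁻¹)) t := by
      intro t
      simp only [hesymm]
      by_cases ht : t ∈ Set.Ioc L U
      · rw [Set.indicator_of_mem ht]
        have hmeas2 : MeasurableSet (shapeRegion n (rTrunc R t) ∩ {y : Fin n → ℝ | ∀ i, y i < t}) := by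
          refine (measurableSet_shapeRegion _ _).inter ?_
          have : {y : Fin n → ℝ | ∀ i, y i < t} = ⋂ i, {y : Fin n → ℝ | y i < t} := by
            ext y; simp
          rw [this]
          exact .iInter fun i => measurableSet_lt (measurable_pi_apply i) measurable_const
        have hptw : (fun y : Fin n → ℝ => Set.indicator S f (Fin.snoc y t))
            = fun y => Set.indicator (shapeRegion n (rTrunc R t) ∩ {y : Fin n → ℝ | ∀ i, y i < t})
                (fun y => t⁻¹ * ∏ i, (y i)⁻¹) y := by
          funext y
          by_cases hy : Fin.snoc y t ∈ S
          · have hy' := (snoc_mem_shapeRegion_iff ht y).1 hy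
            rw [Set.indicator_of_mem hy, Set.indicator_of_mem (show y ∈ shapeRegion n (rTrunc R t) ∩ {y : Fin n → ℝ | ∀ i, y i < t} from ⟨hy'.1, hy'.2⟩)]
            show (∏ i : Fin (n+1), (Fin.snoc y t i)⁻¹) = _
            rw [Fin.prod_univ_castSucc]
            simp only [Fin.snoc_castSucc, Fin.snoc_last]
            rw [mul_comm]
          · rw [Set.indicator_of_notMem hy, Set.indicator_of_notMem]
            rintro ⟨hmem1, hmem2⟩
            exact hy ((snoc_mem_shapeRegion_iff ht y).2 ⟨hmem1, hmem2⟩)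
        rw [hptw, integral_indicator hmeas2, integral_const_mul,
          setIntegral_congr_set (shapeRegion_ae_eq_inter (by simp [rTrunc]))]
      · rw [Set.indicator_of_notMem ht]
        have hzero : ∀ y : Fin n → ℝ, Set.indicator S f (Fin.snoc y t) = 0 := fun y =>
          Set.indicator_of_notMem (snoc_not_mem_shapeRegion ht y) f
        simp only [hzero, integral_zero]
    have step3 : ∫ t : ℝ, ∫ y : Fin n → ℝ, Set.indicator S f (e.symm (t, y))
        = ∫ t in Set.Ioc L U, t⁻¹ * ∫ y in shapeRegion n (rTrunc R t), (∏ i, (y i)⁻¹) := by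
      simp only [hinner]
      exact integral_indicator measurableSet_Ioc
    -- use induction hypothesis on the inner integral
    have hlogtrunc : ∀ t : ℝ, (fun i => Real.log (rTrunc R t i)) = Fin.snoc a (Real.log t) := by
      intro t
      funext i
      induction i using Fin.lastCases with
      | last => simp [rTrunc]
      | cast i' => simp [rTrunc, ha]
    have step4 : ∫ t in Set.Ioc L U, t⁻¹ * ∫ y in shapeRegion n (rTrunc R t), (∏ i, (y i)⁻¹)
        = ∫ t in Set.Ioc L U, ((n.factorial : ℝ))⁻¹
            * (eval (Fin.snoc a (Real.log t)) H * t⁻¹) := by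
      refine setIntegral_congr_fun measurableSet_Ioc fun t ht => ?_
      rw [hEval (rTrunc R t) (one_le_rTrunc hR1 hmono ht.1.le) (rTrunc_monotone hmono ht.1.le),
        hlogtrunc t]
      ring
    -- FTC
    have ht0 : ∀ t ∈ Set.uIcc L U, t ≠ 0 := by
      intro t ht
      rw [Set.uIcc_of_le hLU] at ht
      exact (lt_of_lt_of_le (lt_of_lt_of_le zero_lt_one h1L) ht.1).ne'
    have hderiv : ∀ t ∈ Set.uIcc L U,
        HasDerivAt (fun u => eval (Fin.snoc a (Real.log u)) (psi n H))
          (eval (Fin.snoc a (Real.log t)) H * t⁻¹) t := by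
      intro t ht
      have := (psi_hasDerivAt H a (Real.log t)).comp t (Real.hasDerivAt_log (ht0 t ht))
      simpa [Function.comp_def] using this
    have hcont : ContinuousOn (fun t => eval (Fin.snoc a (Real.log t)) H * t⁻¹)
        (Set.uIcc L U) := by
      have hsub : Set.uIcc L U ⊆ {(0:ℝ)}ᶜ := fun t ht => by
        simpa using ht0 t ht
      exact ((continuous_eval_snoc H a).comp_continuousOn
        (Real.continuousOn_log.mono hsub)).mul (continuousOn_id.inv₀ fun t ht => ht0 t ht)
    have hFTC : ∫ t in Set.Ioc L U, (eval (Fin.snoc a (Real.log t)) H * t⁻¹)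
        = eval (Fin.snoc a (Real.log U)) (psi n H)
          - eval (Fin.snoc a (Real.log L)) (psi n H) := by
      rw [← intervalIntegral.integral_of_le hLU]
      exact intervalIntegral.integral_eq_sub_of_hasDerivAt hderiv hcont.intervalIntegrable
    -- evaluation of the renamed polynomials
    have hev1 : (fun i => Real.log (R i)) ∘ j1 = Fin.snoc a (Real.log U) := by
      funext i
      induction i using Fin.lastCases with
      | last => simp [hj1, hUdef]
      | cast i' => simp [hj1, ha]
    have hev0 : (fun i => Real.log (R i)) ∘ Fin.castSucc = Fin.snoc a (Real.log L) := by
      funext i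
      induction i using Fin.lastCases with
      | last => simp [hLdef]
      | cast i' => simp [ha]
    -- put everything together
    rw [step1, step2, step3, step4, integral_const_mul, hFTC]
    rw [MvPolynomial.smul_eval, map_sub, eval_rename, eval_rename, hev1, hev0]
    rw [Nat.factorial_succ]
    have hfact : (n.factorial : ℝ) ≠ 0 := Nat.cast_ne_zero.2 n.factorial_ne_zero
    push_cast
    field_simp

/-- There is a homogeneous polynomial `H` of degree `ℓ` in `ℓ+1` variables such that for all
`1 ≤ R_1 ≤ ⋯ ≤ R_{ℓ+1}`, the integral `∫_{W(R)} ∏ dx_i/x_i` equals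
`(1/ℓ!)·H(log R_1, …, log R_{ℓ+1})`. -/
theorem measure_shapeRegion_eq_homogeneous_poly_of_logs (ℓ : ℕ) (hℓ : 1 ≤ ℓ) :
    ∃ H : MvPolynomial (Fin (ℓ + 1)) ℝ, H.IsHomogeneous ℓ ∧
      ∀ R : Fin (ℓ + 1) → ℝ, 1 ≤ R 0 → Monotone R →
        ∫ x in shapeRegion ℓ R, (∏ i, (x i)⁻¹) =
          ((ℓ.factorial : ℝ))⁻¹ * MvPolynomial.eval (fun i => Real.log (R i)) H := by
  exact key_induction ℓ
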